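/- Let U, β, B, H ∈ ℝ and α ≥ 0. Let k = (k₁, k₂) ∈ ℝ² with k₁ ≠ 0, let ν ∈ ℂ, and let ŵ, b̂, ψ̂ ∈ ℂ with ψ̂ ≠ 0. Suppose the plane-wave amplitudes satisfy the linear system obtained from the linearised α-TQG equations: (ν − k₁U)ŵ − k₁(U + B − β)ψ̂ = −k₁(U − H/2)b̂, (ν − k₁U)b̂ = −k₁B ψ̂, and −ŵ = (|k|² + 1)(α|k|² + 1)ψ̂, where |k|² = k₁² + k₂². Then the Doppler-shifted phase speed C := (ν − k₁U)/k₁ satisfies the dispersion relation C²(|k|² + 1)(α|k|² + 1) + C·X + Y = 0, where X := U + B − β and Y := (U − H/2)B. -/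

import Mathlib

/-- The dispersion relation for linearised α-TQG thermal Rossby waves: if the plane-wave
amplitudes (ŵ, b̂, ψ̂), ψ̂ ≠ 0, satisfy the linearised algebraic system, then the
Doppler-shifted phase speed C = (ν − k₁U)/k₁ satisfies
C²(|k|²+1)(α|k|²+1) + CX + Y = 0 with X = U + B − β, Y = (U − H/2)B. -/
theorem stmt9 (U β B H α : ℝ) (hα : 0 ≤ α)
    (k : ℝ × ℝ) (hk : k.1 ≠ 0)
    (ν wHat bHat psiHat : ℂ) (hψ : psiHat ≠ 0)
    (h1 : (ν - (k.1 : ℂ) * (U : ℂ)) * wHat - (k.1 : ℂ) * ((U : ℂ) + (B : ℂ) - (β : ℂ)) * psiHat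
          = -((k.1 : ℂ) * ((U : ℂ) - (H : ℂ) / 2)) * bHat)
    (h2 : (ν - (k.1 : ℂ) * (U : ℂ)) * bHat = -((k.1 : ℂ) * (B : ℂ)) * psiHat)
    (h3 : -wHat = (((k.1 : ℂ) ^ 2 + (k.2 : ℂ) ^ 2 + 1)
          * ((α : ℂ) * ((k.1 : ℂ) ^ 2 + (k.2 : ℂ) ^ 2) + 1)) * psiHat) :
    ((ν - (k.1 : ℂ) * (U : ℂ)) / (k.1 : ℂ)) ^ 2
        * (((k.1 : ℂ) ^ 2 + (k.2 : ℂ) ^ 2 + 1)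
          * ((α : ℂ) * ((k.1 : ℂ) ^ 2 + (k.2 : ℂ) ^ 2) + 1))
      + ((ν - (k.1 : ℂ) * (U : ℂ)) / (k.1 : ℂ)) * ((U : ℂ) + (B : ℂ) - (β : ℂ))
      + ((U : ℂ) - (H : ℂ) / 2) * (B : ℂ) = 0 := by
  have hk' : (k.1 : ℂ) ≠ 0 := by exact_mod_cast hk
  set c : ℂ := ν - (k.1:ℂ) * (U:ℂ) with hc
  set M : ℂ := ((k.1:ℂ) ^ 2 + (k.2:ℂ) ^ 2 + 1) * ((α:ℂ) * ((k.1:ℂ) ^ 2 + (k.2:ℂ) ^ 2) + 1) with hM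
  have key : (c^2 * M + c * (k.1:ℂ) * ((U:ℂ) + (B:ℂ) - (β:ℂ))
      + (k.1:ℂ)^2 * (((U:ℂ) - (H:ℂ)/2) * (B:ℂ))) * psiHat = 0 := by
    linear_combination (-c) * h1 + ((k.1:ℂ) * ((U:ℂ) - (H:ℂ)/2)) * h2 - c^2 * h3
  have key2 : c^2 * M + c * (k.1:ℂ) * ((U:ℂ) + (B:ℂ) - (β:ℂ))
      + (k.1:ℂ)^2 * (((U:ℂ) - (H:ℂ)/2) * (B:ℂ)) = 0 :=
    (mul_eq_zero.mp key).resolve_right hψ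
  have hk' : (k.1 : ℂ) ≠ 0 := by exact_mod_cast hk
  have expand : ((c / (k.1:ℂ)) ^ 2 * M + (c / (k.1:ℂ)) * ((U:ℂ) + (B:ℂ) - (β:ℂ))
      + ((U:ℂ) - (H:ℂ)/2) * (B:ℂ))
      = (c^2 * M + c * (k.1:ℂ) * ((U:ℂ) + (B:ℂ) - (β:ℂ))
        + (k.1:ℂ)^2 * (((U:ℂ) - (H:ℂ)/2) * (B:ℂ))) / (k.1:ℂ)^2 := by
    field_simp
  rw [expand, key2, zero_div]
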